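/- Let α ∈ ℝ with α ≠ −1, and let f, g ∈ ℝ[[X]] be formal power series with constant coefficient of f equal to 1, such that f − 1 = 2 X² f' + X f + α X f² and (α + 1) X f g = f − 1 in ℝ[[X]]. Then g has constant coefficient 1 and satisfies g − 1 = 2 X² g' + X g + (α + 1) X g² in ℝ[[X]]. -/

import Mathlib

open PowerSeries

theorem quotient_series_satisfies_shifted_ode (α : ℝ) (hα : α ≠ -1) (f g : PowerSeries ℝ)
    (hf0 : PowerSeries.constantCoeff f = 1)
    (hf : f - 1 = 2 * PowerSeries.X ^ 2 * derivativeFun f + PowerSeries.X * f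
      + PowerSeries.C α * PowerSeries.X * f ^ 2)
    (hfg : PowerSeries.C (α + 1) * PowerSeries.X * f * g = f - 1) :
    PowerSeries.constantCoeff g = 1 ∧
      g - 1 = 2 * PowerSeries.X ^ 2 * derivativeFun g + PowerSeries.X * g
        + PowerSeries.C (α + 1) * PowerSeries.X * g ^ 2 := by
  have hα1 : α + 1 ≠ 0 := fun h => hα (by linarith)
  have hX : (PowerSeries.X : PowerSeries ℝ) ≠ 0 := PowerSeries.X_ne_zero
  have hfne : f ≠ 0 := fun h => by simp [h] at hf0
  have hCadd : PowerSeries.C (α + 1) = PowerSeries.C α + 1 := by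
    rw [map_add, map_one]
  have hC : PowerSeries.C α + 1 ≠ 0 := by
    rw [← hCadd]
    intro h
    exact hα1 (by simpa using congrArg (PowerSeries.constantCoeff) h)
  rw [hCadd] at hfg ⊢
  -- derivative of hfg
  have key : ∀ p : PowerSeries ℝ, d⁄dX ℝ p = derivativeFun p := fun _ => rfl
  have hd : (PowerSeries.C α + 1) * (f * g + PowerSeries.X * derivativeFun f * g
      + PowerSeries.X * f * derivativeFun g) = derivativeFun f := by
    have h := congrArg (d⁄dX ℝ) hfg
    simp only [map_sub, map_one, Derivation.leibniz, derivative_X, derivative_C, map_add,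
      smul_eq_mul, mul_zero, zero_mul, add_zero, zero_add, mul_one, sub_zero] at h
    simp only [key, derivativeFun_one, mul_zero, add_zero, sub_zero] at h
    linear_combination h
  -- constant coefficient of g
  have h1 : PowerSeries.X * ((PowerSeries.C α + 1) * f * g)
      = PowerSeries.X * (2 * PowerSeries.X * derivativeFun f + f
        + PowerSeries.C α * f ^ 2) := by
    linear_combination hfg + hf
  have h2 := mul_left_cancel₀ hX h1
  have h3 := congrArg (PowerSeries.constantCoeff) h2
  simp [hf0] at h3
  have hg0 : PowerSeries.constantCoeff g = 1 := by
    have : (α + 1) * PowerSeries.constantCoeff g = (α + 1) * 1 := by ring_nf; linarith [h3]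
    exact mul_left_cancel₀ hα1 this
  refine ⟨hg0, ?_⟩
  have hcan : (PowerSeries.C α + 1) * PowerSeries.X * f ^ 2 ≠ 0 :=
    mul_ne_zero (mul_ne_zero hC hX) (pow_ne_zero 2 hfne)
  apply mul_left_cancel₀ hcan
  linear_combination hf + (PowerSeries.X * f + 1 + 2 * PowerSeries.X ^ 2 * derivativeFun f
    - (PowerSeries.C α + 1) * PowerSeries.X * f * g) * hfg
    - 2 * PowerSeries.X ^ 2 * f * hd
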